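/- (Recovery of a constant elastic tensor from its acoustic tensor.) Let C⁽¹⁾ and C⁽²⁾ be maps Fin 3 → Fin 3 → Fin 3 → Fin 3 → ℝ, each satisfying the symmetries C i j k l = C i j l k and C i j k l = C k l i j for all indices. If for every ξ ∈ ℝ³ and all indices i, l one has ∑_{j,k} C⁽¹⁾ i j k l · ξ_j · ξ_k = ∑_{j,k} C⁽²⁾ i j k l · ξ_j · ξ_k, then C⁽¹⁾ = C⁽²⁾ (i.e. C⁽¹⁾ i j k l = C⁽²⁾ i j k l for all indices). -/

import Mathlib

theorem elastic_tensor_recovery_from_acoustic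
    (C1 C2 : Fin 3 → Fin 3 → Fin 3 → Fin 3 → ℝ)
    (h1minor : ∀ i j k l, C1 i j k l = C1 i j l k)
    (h1major : ∀ i j k l, C1 i j k l = C1 k l i j)
    (h2minor : ∀ i j k l, C2 i j k l = C2 i j l k)
    (h2major : ∀ i j k l, C2 i j k l = C2 k l i j)
    (hac : ∀ ξ : Fin 3 → ℝ, ∀ i l : Fin 3,
      ∑ j, ∑ k, C1 i j k l * ξ j * ξ k = ∑ j, ∑ k, C2 i j k l * ξ j * ξ k) :
    C1 = C2 := by
  set D : Fin 3 → Fin 3 → Fin 3 → Fin 3 → ℝ :=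
    fun i j k l => C1 i j k l - C2 i j k l with hD
  have hz : ∀ (ξ : Fin 3 → ℝ) (i l : Fin 3),
      ∑ a, ∑ b, D i a b l * ξ a * ξ b = 0 := by
    intro ξ i l
    have h := hac ξ i l
    simp only [hD, sub_mul]
    rw [Finset.sum_congr rfl (fun a _ => Finset.sum_sub_distrib _ _),
      Finset.sum_sub_distrib, h, sub_self]
  have pol : ∀ i l j k, D i j k l + D i k j l = 0 := by
    intro i l j k
    have h1 := hz (Pi.single j 1 + Pi.single k 1) i l
    have h2 := hz (Pi.single j 1) i l
    have h3 := hz (Pi.single k 1) i l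
    simp only [Pi.add_apply, Pi.single_apply, mul_add, add_mul, mul_ite, ite_mul,
      one_mul, mul_one, mul_zero, zero_mul, add_zero, zero_add,
      Finset.sum_add_distrib, Finset.sum_ite_eq, Finset.sum_ite_eq',
      Finset.mem_univ, if_true] at h1 h2 h3
    linarith
  have a23 : ∀ i j k l, D i j k l = -D i k j l := by
    intro i j k l
    have := pol i l j k
    linarith
  have dmin : ∀ i j k l, D i j k l = D i j l k := by
    intro i j k l
    simp only [hD]
    rw [h1minor, h2minor]
  have dmaj : ∀ i j k l, D i j k l = D k l i j := by
    intro i j k l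
    simp only [hD]
    rw [h1major, h2major]
  have sym12 : ∀ i j k l, D i j k l = D j i k l := by
    intro i j k l
    have e1 := a23 i j k l
    have e2 := dmaj i k j l
    have e3 := a23 j l i k
    have e4 := dmin j i l k
    linarith
  have hzero : ∀ i j k l, D i j k l = 0 := by
    intro i j k l
    have e1 := sym12 i j k l
    have e2 := a23 j i k l
    have e3 := sym12 j k i l
    have e4 := a23 k j i l
    have e5 := sym12 k i j l
    have e6 := a23 i k j l
    linarith
  funext i j k l
  have := hzero i j k l
  simp only [hD] at this
  linarith
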